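/- arXiv:0909.4101 — 2 statements merged into one kernel-verified Lean document; each statement's English description precedes it below -/
import Mathlib

section
/- The Bombieri–Weyl inner product is invariant under the orthogonal group: for every ψ ∈ O(n+1) and all homogeneous polynomials f, g ∈ ℝ[x_0,…,x_n] of degree d, one has ⟨f∘ψ, g∘ψ⟩_W = ⟨f, g⟩_W. -/
open MvPolynomial Finset

/-- Bombieri–Weyl inner product of two polynomials (intended for homogeneous
polynomials of the same degree `d`): `⟨Σ aⱼ xʲ, Σ bⱼ xʲ⟩_W = Σ aⱼ bⱼ / binom(d, j)`
where `binom(d, j) = d! / (j₀! ⋯ jₙ!)`. -/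
noncomputable def bwInner {m : ℕ} (p q : MvPolynomial (Fin m) ℝ) : ℝ :=
  ∑ j ∈ p.support ∪ q.support,
    (p.coeff j * q.coeff j) / (Nat.multinomial Finset.univ j : ℝ)

/-- The substitution action of a matrix `ψ` on polynomials: `(f ∘ ψ)(x) = f(ψ x)`,
obtained by substituting `xₖ ↦ Σₗ ψₖₗ xₗ`. -/
noncomputable def substMat {m : ℕ} (ψ : Matrix (Fin m) (Fin m) ℝ)
    (p : MvPolynomial (Fin m) ℝ) : MvPolynomial (Fin m) ℝ :=
  MvPolynomial.aeval (fun k => ∑ l, MvPolynomial.C (ψ k l) * MvPolynomial.X l) p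

variable {m : ℕ}

/-- The product of factorials of the exponents, as a real number. -/
noncomputable def wR {m : ℕ} (j : Fin m →₀ ℕ) : ℝ := ∏ i, ((j i).factorial : ℝ)

lemma wR_pos (j : Fin m →₀ ℕ) : 0 < wR j :=
  Finset.prod_pos fun i _ => by exact_mod_cast (j i).factorial_pos

/-- Auxiliary pairing `∑ aⱼ bⱼ · j!`. -/
noncomputable def BW {m : ℕ} (p q : MvPolynomial (Fin m) ℝ) : ℝ :=
  ∑ j ∈ p.support, p.coeff j * q.coeff j * wR j

lemma BW_eq_sum_superset {p q : MvPolynomial (Fin m) ℝ} {s : Finset (Fin m →₀ ℕ)}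
    (hs : p.support ⊆ s) :
    BW p q = ∑ j ∈ s, p.coeff j * q.coeff j * wR j :=
by
  unfold BW
  refine Finset.sum_subset hs (fun j _ hj => ?_)
  simp [MvPolynomial.notMem_support_iff.mp hj]

lemma BW_comm (p q : MvPolynomial (Fin m) ℝ) : BW p q = BW q p := by
  rw [BW_eq_sum_superset (Finset.subset_union_left : p.support ⊆ p.support ∪ q.support),
    BW_eq_sum_superset (Finset.subset_union_right : q.support ⊆ p.support ∪ q.support)]
  exact Finset.sum_congr rfl fun j _ => by ring

lemma BW_sum_right (p : MvPolynomial (Fin m) ℝ) {ι : Type*} (s : Finset ι)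
    (f : ι → MvPolynomial (Fin m) ℝ) :
    BW p (∑ k ∈ s, f k) = ∑ k ∈ s, BW p (f k) := by
  unfold BW
  rw [Finset.sum_comm]
  refine Finset.sum_congr rfl fun j _ => ?_
  rw [MvPolynomial.coeff_sum, Finset.mul_sum, Finset.sum_mul]

lemma BW_sum_left {ι : Type*} (s : Finset ι) (f : ι → MvPolynomial (Fin m) ℝ)
    (q : MvPolynomial (Fin m) ℝ) :
    BW (∑ k ∈ s, f k) q = ∑ k ∈ s, BW (f k) q := by
  rw [BW_comm, BW_sum_right]
  exact Finset.sum_congr rfl fun k _ => BW_comm _ _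

lemma BW_C_mul_right (p q : MvPolynomial (Fin m) ℝ) (c : ℝ) :
    BW p (C c * q) = c * BW p q := by
  unfold BW
  rw [Finset.mul_sum]
  refine Finset.sum_congr rfl fun j _ => ?_
  rw [MvPolynomial.coeff_C_mul]; ring

lemma BW_C_mul_left (p q : MvPolynomial (Fin m) ℝ) (c : ℝ) :
    BW (C c * p) q = c * BW p q := by
  rw [BW_comm, BW_C_mul_right, BW_comm]

lemma BW_monomial (j j' : Fin m →₀ ℕ) (a b : ℝ) :
    BW (monomial j a) (monomial j' b) = if j = j' then a * b * wR j else 0 := by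
  by_cases ha : a = 0
  · simp [BW, ha]
  · unfold BW
    rw [MvPolynomial.support_monomial, if_neg ha, Finset.sum_singleton,
      MvPolynomial.coeff_monomial, MvPolynomial.coeff_monomial, if_pos rfl]
    by_cases h : j = j'
    · subst h; simp
    · rw [if_neg (fun hh => h hh.symm), if_neg h]
      ring

lemma pderiv_substMat (ψ : Matrix (Fin m) (Fin m) ℝ) (l : Fin m)
    (p : MvPolynomial (Fin m) ℝ) :
    pderiv l (substMat ψ p) = ∑ k, C (ψ k l) * substMat ψ (pderiv k p) := by
  induction p using MvPolynomial.induction_on with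
  | C a => simp [substMat, pderiv_C]
  | add p q hp hq =>
      have h1 : substMat ψ (p + q) = substMat ψ p + substMat ψ q := by
        rw [substMat, map_add]; rfl
      have h2 : ∀ a b : MvPolynomial (Fin m) ℝ, substMat ψ (a + b)
          = substMat ψ a + substMat ψ b := fun a b => by
        rw [substMat, map_add]; rfl
      simp only [h1, map_add, hp, hq, h2, mul_add, Finset.sum_add_distrib]
  | mul_X p i hp =>
      have hXi : substMat ψ (X i) = ∑ t, C (ψ i t) * X t := by
        simp [substMat]
      have hd : pderiv l (substMat ψ (X i)) = C (ψ i l) := by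
        rw [hXi, map_sum]
        rw [Finset.sum_eq_single l (fun t _ ht => by
          rw [pderiv_C_mul, pderiv_X_of_ne ht, mul_zero]) (by simp)]
        rw [pderiv_C_mul, pderiv_X_self, mul_one]
      have hrhs : ∀ k, pderiv k (p * X i)
          = pderiv k p * X i + if k = i then p else 0 := by
        intro k
        rw [pderiv_mul]
        congr 1
        by_cases h : k = i
        · subst h; simp
        · simp [pderiv_X_of_ne (Ne.symm h), h]
      calc pderiv l (substMat ψ (p * X i))
          = pderiv l (substMat ψ p * substMat ψ (X i)) := by
            rw [substMat, map_mul]; rfl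
        _ = pderiv l (substMat ψ p) * substMat ψ (X i)
            + substMat ψ p * C (ψ i l) := by rw [pderiv_mul, hd]
        _ = (∑ k, C (ψ k l) * substMat ψ (pderiv k p)) * substMat ψ (X i)
            + substMat ψ p * C (ψ i l) := by rw [hp]
        _ = ∑ k, C (ψ k l) * substMat ψ (pderiv k (p * X i)) := by
            have expand : ∀ k, substMat ψ (pderiv k (p * X i))
                = substMat ψ (pderiv k p) * substMat ψ (X i)
                  + if k = i then substMat ψ p else 0 := by
              intro k
              rw [hrhs k, substMat, map_add, map_mul]
              by_cases h : k = i <;> simp [h, substMat]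
            simp only [expand, mul_add, Finset.sum_add_distrib]
            congr 1
            · rw [Finset.sum_mul]
              exact Finset.sum_congr rfl fun k _ => (mul_assoc _ _ _)
            · simp only [mul_ite, mul_zero, Finset.sum_ite_eq',
                Finset.mem_univ, if_true]
              ring

lemma wR_sub_single (j : Fin m →₀ ℕ) (i : Fin m) (h : j i ≠ 0) :
    (j i : ℝ) * wR (j - Finsupp.single i 1) = wR j := by
  unfold wR
  rw [← Finset.mul_prod_erase Finset.univ _ (Finset.mem_univ i),
    ← Finset.mul_prod_erase Finset.univ (fun i' => ((j i' : ℕ).factorial : ℝ))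
      (Finset.mem_univ i), ← mul_assoc]
  congr 1
  · rw [Finsupp.tsub_apply, Finsupp.single_eq_same]
    rw [← Nat.cast_mul, Nat.mul_factorial_pred h]
  · refine Finset.prod_congr rfl fun i' hi' => ?_
    rw [Finsupp.tsub_apply, Finsupp.single_eq_of_ne' (Finset.ne_of_mem_erase hi').symm,
      Nat.sub_zero]

lemma eq_of_sub_single_eq {j j' : Fin m →₀ ℕ} {i : Fin m}
    (h : j - Finsupp.single i 1 = j' - Finsupp.single i 1)
    (hj : j i ≠ 0) (hj' : j' i ≠ 0) : j = j' := by
  have h1 : Finsupp.single i 1 ≤ j := Finsupp.single_le_iff.mpr (Nat.one_le_iff_ne_zero.mpr hj)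
  have h2 : Finsupp.single i 1 ≤ j' := Finsupp.single_le_iff.mpr (Nat.one_le_iff_ne_zero.mpr hj')
  calc j = j - Finsupp.single i 1 + Finsupp.single i 1 := (tsub_add_cancel_of_le h1).symm
    _ = j' - Finsupp.single i 1 + Finsupp.single i 1 := by rw [h]
    _ = j' := tsub_add_cancel_of_le h2

lemma key_mono (d : ℕ) (j j' : Fin m →₀ ℕ) (a b : ℝ)
    (hj : ∑ i, j i = d) (hj' : ∑ i, j' i = d) :
    ∑ i, BW (pderiv i (monomial j a)) (pderiv i (monomial j' b))
      = d * BW (monomial j a) (monomial j' b) := by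
  simp only [pderiv_monomial, BW_monomial]
  by_cases h : j = j'
  · subst h
    rw [if_pos rfl]
    have step : ∀ i : Fin m,
        (if j - Finsupp.single i 1 = j - Finsupp.single i 1
          then a * ↑(j i) * (b * ↑(j i)) * wR (j - Finsupp.single i 1) else 0)
        = (j i : ℝ) * (a * b * wR j) := by
      intro i
      rw [if_pos rfl]
      by_cases hi : j i = 0
      · simp [hi]
      · rw [← wR_sub_single j i hi]; ring
    rw [Finset.sum_congr rfl fun i _ => step i, ← Finset.sum_mul]
    congr 1
    rw [← hj]; push_cast; rfl
  · rw [if_neg h, mul_zero]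
    refine Finset.sum_eq_zero fun i _ => ?_
    by_cases hc : j - Finsupp.single i 1 = j' - Finsupp.single i 1
    · rw [if_pos hc]
      by_cases hi : j i = 0
      · simp [hi]
      · by_cases hi' : j' i = 0
        · simp [hi']
        · exact absurd (eq_of_sub_single_eq hc hi hi') h
    · rw [if_neg hc]

lemma degree_eq_sum_univ (j : Fin m →₀ ℕ) : Finsupp.degree j = ∑ i, j i :=
  Finset.sum_subset (Finset.subset_univ _) fun i _ hi => by
    simpa using Finsupp.notMem_support_iff.mp hi

lemma homog_sum_eq {f : MvPolynomial (Fin m) ℝ} {d : ℕ} (hf : f.IsHomogeneous d)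
    {j : Fin m →₀ ℕ} (hj : j ∈ f.support) : ∑ i, j i = d := by
  have h1 := hf (MvPolynomial.mem_support_iff.mp hj)
  have h2 : Finsupp.degree j = Finsupp.weight 1 j := by
    rw [Finsupp.degree_eq_weight_one]; rfl
  rw [← h1, ← h2, ← degree_eq_sum_univ]

lemma contraction' (d : ℕ) (s t : Finset (Fin m →₀ ℕ)) (a b : (Fin m →₀ ℕ) → ℝ)
    (hs : ∀ j ∈ s, ∑ i, j i = d) (ht : ∀ j ∈ t, ∑ i, j i = d) :
    ∑ i, BW (pderiv i (∑ j ∈ s, monomial j (a j))) (pderiv i (∑ j ∈ t, monomial j (b j)))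
      = d * BW (∑ j ∈ s, monomial j (a j)) (∑ j ∈ t, monomial j (b j)) := by
  simp only [map_sum, BW_sum_left, BW_sum_right]
  rw [Finset.mul_sum]
  simp only [Finset.mul_sum]
  rw [Finset.sum_comm]
  refine Finset.sum_congr rfl fun j hj => ?_
  rw [Finset.sum_comm]
  refine Finset.sum_congr rfl fun j' hj' => ?_
  exact key_mono d j' j (a j') (b j) (hs j' hj') (ht j hj)

lemma contraction (d : ℕ) (f g : MvPolynomial (Fin m) ℝ)
    (hf : f.IsHomogeneous d) (hg : g.IsHomogeneous d) :
    ∑ i, BW (pderiv i f) (pderiv i g) = d * BW f g := by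
  have h := contraction' d f.support g.support
    (fun j => MvPolynomial.coeff j f) (fun j => MvPolynomial.coeff j g)
    (fun j hj => homog_sum_eq hf hj) (fun j hj => homog_sum_eq hg hj)
  rwa [MvPolynomial.support_sum_monomial_coeff f,
    MvPolynomial.support_sum_monomial_coeff g] at h

lemma IsHomogeneous.pderiv' {f : MvPolynomial (Fin m) ℝ} {d : ℕ}
    (hf : f.IsHomogeneous (d + 1)) (i : Fin m) :
    (pderiv i f).IsHomogeneous d := by
  conv_lhs => rw [← MvPolynomial.support_sum_monomial_coeff f]
  rw [map_sum]
  refine MvPolynomial.IsHomogeneous.sum _ _ _ fun j hj => ?_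
  rw [pderiv_monomial]
  by_cases hi : j i = 0
  · have hz : MvPolynomial.coeff j f * ((j i : ℕ) : ℝ) = 0 := by simp [hi]
    rw [hz, map_zero]
    exact MvPolynomial.isHomogeneous_zero _ _ d
  · refine MvPolynomial.isHomogeneous_monomial _ ?_
    rw [degree_eq_sum_univ]
    have hs := homog_sum_eq hf hj
    rw [← Finset.add_sum_erase _ _ (Finset.mem_univ i)] at hs ⊢
    have he : ∀ i' ∈ Finset.univ.erase i,
        (j - Finsupp.single i 1 : Fin m →₀ ℕ) i' = j i' := fun i' hi' => by
      rw [Finsupp.tsub_apply, Finsupp.single_eq_of_ne' (Finset.ne_of_mem_erase hi').symm,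
        Nat.sub_zero]
    rw [Finset.sum_congr rfl he, Finsupp.tsub_apply, Finsupp.single_eq_same]
    have hs2 : (Finset.univ.erase i).sum ⇑j = ∑ x ∈ Finset.univ.erase i, j x := rfl
    omega

lemma substMat_isHomogeneous (ψ : Matrix (Fin m) (Fin m) ℝ) {f : MvPolynomial (Fin m) ℝ}
    {d : ℕ} (hf : f.IsHomogeneous d) : (substMat ψ f).IsHomogeneous d := by
  have := hf.aeval (fun k => ∑ l, MvPolynomial.C (ψ k l) * MvPolynomial.X l)
    (fun k => MvPolynomial.IsHomogeneous.sum _ _ _ fun l _ =>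
      MvPolynomial.isHomogeneous_C_mul_X _ _)
  rwa [one_mul] at this

lemma eq_C_of_homog0 {f : MvPolynomial (Fin m) ℝ} (hf : f.IsHomogeneous 0) :
    f = C (MvPolynomial.coeff 0 f) := by
  ext j
  rw [MvPolynomial.coeff_C]
  by_cases h : j = 0
  · subst h; simp
  · rw [if_neg (fun hh => h hh.symm)]
    exact hf.coeff_eq_zero (by rwa [Ne, Finsupp.degree_eq_zero_iff])

lemma substMat_C (ψ : Matrix (Fin m) (Fin m) ℝ) (a : ℝ) :
    substMat ψ (C a) = C a := by
  simp [substMat]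

lemma BW_C_C (a b : ℝ) : BW (C a : MvPolynomial (Fin m) ℝ) (C b) = a * b := by
  rw [MvPolynomial.C_apply, MvPolynomial.C_apply, BW_monomial, if_pos rfl]
  simp [wR]

lemma BW_substMat (ψ : Matrix (Fin m) (Fin m) ℝ)
    (hψ : ψ ∈ Matrix.orthogonalGroup (Fin m) ℝ) (d : ℕ) :
    ∀ f g : MvPolynomial (Fin m) ℝ, f.IsHomogeneous d → g.IsHomogeneous d →
      BW (substMat ψ f) (substMat ψ g) = BW f g := by
  have horth : ∀ k k' : Fin m, ∑ l, ψ k l * ψ k' l = if k = k' then 1 else 0 := by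
    intro k k'
    have h1 := (Matrix.mem_orthogonalGroup_iff (Fin m) (R := ℝ)).mp hψ
    have := congrArg (fun M : Matrix (Fin m) (Fin m) ℝ => M k k') h1
    simpa [Matrix.mul_apply, Matrix.one_apply, Matrix.star_eq_conjTranspose,
      Matrix.conjTranspose_apply] using this
  induction d with
  | zero =>
    intro f g hf hg
    rw [eq_C_of_homog0 hf, eq_C_of_homog0 hg, substMat_C, substMat_C]
  | succ d ih =>
    intro f g hf hg
    have hF : (substMat ψ f).IsHomogeneous (d + 1) := substMat_isHomogeneous ψ hf
    have hG : (substMat ψ g).IsHomogeneous (d + 1) := substMat_isHomogeneous ψ hg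
    have h1 := contraction (d + 1) _ _ hF hG
    have h2 := contraction (d + 1) f g hf hg
    have h3 : ∑ l, BW (pderiv l (substMat ψ f)) (pderiv l (substMat ψ g))
        = ∑ k, BW (substMat ψ (pderiv k f)) (substMat ψ (pderiv k g)) := by
      calc ∑ l, BW (pderiv l (substMat ψ f)) (pderiv l (substMat ψ g))
          = ∑ l, ∑ k, ∑ k', (ψ k l * ψ k' l)
              * BW (substMat ψ (pderiv k f)) (substMat ψ (pderiv k' g)) := by
            refine Finset.sum_congr rfl fun l _ => ?_
            rw [pderiv_substMat, pderiv_substMat, BW_sum_left]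
            refine Finset.sum_congr rfl fun k _ => ?_
            rw [BW_C_mul_left, BW_sum_right, Finset.mul_sum]
            refine Finset.sum_congr rfl fun k' _ => ?_
            rw [BW_C_mul_right]; ring
        _ = ∑ k, ∑ k', ∑ l, (ψ k l * ψ k' l)
              * BW (substMat ψ (pderiv k f)) (substMat ψ (pderiv k' g)) := by
            rw [Finset.sum_comm]
            exact Finset.sum_congr rfl fun k _ => Finset.sum_comm
        _ = ∑ k, ∑ k', (if k = k' then (1:ℝ) else 0)
              * BW (substMat ψ (pderiv k f)) (substMat ψ (pderiv k' g)) := by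
            refine Finset.sum_congr rfl fun k _ => Finset.sum_congr rfl fun k' _ => ?_
            rw [← Finset.sum_mul, horth]
        _ = ∑ k, BW (substMat ψ (pderiv k f)) (substMat ψ (pderiv k g)) := by
            refine Finset.sum_congr rfl fun k _ => ?_
            rw [Finset.sum_eq_single k (fun k' _ hk' => by
              rw [if_neg (fun hh => hk' hh.symm), zero_mul]) (by simp)]
            rw [if_pos rfl, one_mul]
    have h4 : ∑ k, BW (substMat ψ (pderiv k f)) (substMat ψ (pderiv k g))
        = ∑ k, BW (pderiv k f) (pderiv k g) :=
      Finset.sum_congr rfl fun k _ =>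
        ih _ _ (IsHomogeneous.pderiv' hf k) (IsHomogeneous.pderiv' hg k)
    have h5 : ((d : ℝ) + 1) * BW (substMat ψ f) (substMat ψ g)
        = ((d : ℝ) + 1) * BW f g := by
      have := h3.trans (h4.trans h2)
      rw [h1] at this
      push_cast at this ⊢
      linarith [this]
    exact mul_left_cancel₀ (by positivity) h5

lemma bwInner_eq (d : ℕ) (f g : MvPolynomial (Fin m) ℝ)
    (hf : f.IsHomogeneous d) (hg : g.IsHomogeneous d) :
    bwInner f g = BW f g / (d.factorial : ℝ) := by
  rw [bwInner, BW_eq_sum_superset (Finset.subset_union_left :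
    f.support ⊆ f.support ∪ g.support), Finset.sum_div]
  refine Finset.sum_congr rfl fun j hj => ?_
  have hdeg : ∑ i, j i = d := by
    rcases Finset.mem_union.mp hj with h | h
    · exact homog_sum_eq hf h
    · exact homog_sum_eq hg h
  have key : wR j * (Nat.multinomial Finset.univ j : ℝ) = (d.factorial : ℝ) := by
    have := Nat.multinomial_spec Finset.univ j
    rw [hdeg] at this
    rw [wR, ← Nat.cast_prod, ← Nat.cast_mul, this]
  have hw : wR j ≠ 0 := ne_of_gt (wR_pos j)
  calc MvPolynomial.coeff j f * MvPolynomial.coeff j g / (Nat.multinomial Finset.univ j : ℝ)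
      = wR j * (MvPolynomial.coeff j f * MvPolynomial.coeff j g)
        / (wR j * (Nat.multinomial Finset.univ j : ℝ)) := (mul_div_mul_left _ _ hw).symm
    _ = MvPolynomial.coeff j f * MvPolynomial.coeff j g * wR j / (d.factorial : ℝ) := by
        rw [key]; ring_nf

/-- The Bombieri–Weyl inner product is invariant under the orthogonal group
`O(n+1)`: for `ψ ∈ O(n+1)` and homogeneous `f, g` of degree `d` in `x₀, …, xₙ`,
`⟨f ∘ ψ, g ∘ ψ⟩_W = ⟨f, g⟩_W`. -/
theorem bwInner_substMat_orthogonal {n : ℕ} (d : ℕ)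
    (ψ : Matrix (Fin (n + 1)) (Fin (n + 1)) ℝ)
    (hψ : ψ ∈ Matrix.orthogonalGroup (Fin (n + 1)) ℝ)
    (f g : MvPolynomial (Fin (n + 1)) ℝ)
    (hf : f.IsHomogeneous d) (hg : g.IsHomogeneous d) :
    bwInner (substMat ψ f) (substMat ψ g) = bwInner f g := by
  rw [bwInner_eq d _ _ (substMat_isHomogeneous ψ hf) (substMat_isHomogeneous ψ hg),
    bwInner_eq d f g hf hg, BW_substMat ψ hψ d f g hf hg]
end

section
/- For every nonzero f ∈ H_d, the two condition numbers are equivalent up to factors polynomial in n: κ̃(f)/√n ≤ κ(f) ≤ √(2n)·κ̃(f). -/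
open MvPolynomial Finset ENNReal

/-- Bombieri–Weyl norm of one polynomial. -/
noncomputable def bwNorm {m : ℕ} (p : MvPolynomial (Fin m) ℝ) : ℝ :=
  Real.sqrt (bwInner p p)

/-- Bombieri–Weyl norm `‖f‖_W` of a system `f = (f_1, …, f_n)`. -/
noncomputable def bwNormSys {n : ℕ} (f : Fin n → MvPolynomial (Fin (n + 1)) ℝ) : ℝ :=
  Real.sqrt (∑ i, bwInner (f i) (f i))

/-- Distance (w.r.t. the Bombieri–Weyl norm) from a system `f` to a set `S` of systems. -/
noncomputable def bwDist {n : ℕ} (f : Fin n → MvPolynomial (Fin (n + 1)) ℝ)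
    (S : Set (Fin n → MvPolynomial (Fin (n + 1)) ℝ)) : ℝ :=
  sInf ((fun g => bwNormSys (f - g)) '' S)

/-- The unit sphere `Sⁿ ⊆ ℝ^{n+1}`. -/
def unitSphere (n : ℕ) : Set (Fin (n + 1) → ℝ) := {x | ∑ k, x k ^ 2 = 1}

/-- `f` belongs to `H_d`: each component is homogeneous of degree `d i`. -/
def IsSystem {n : ℕ} (d : Fin n → ℕ) (f : Fin n → MvPolynomial (Fin (n + 1)) ℝ) : Prop :=
  ∀ i, (f i).IsHomogeneous (d i)

/-- The derivative `Df(x)` restricted to the tangent space `T_x Sⁿ = x^⊥` is singular,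
i.e. it kills some nonzero tangent vector `v`. -/
def SingularAt {n : ℕ} (f : Fin n → MvPolynomial (Fin (n + 1)) ℝ)
    (x : Fin (n + 1) → ℝ) : Prop :=
  ∃ v : Fin (n + 1) → ℝ, v ≠ 0 ∧ (∑ k, v k * x k = 0) ∧
    ∀ i, ∑ k, MvPolynomial.eval x (MvPolynomial.pderiv k (f i)) * v k = 0

/-- `Σ_ℝ(x)`: the systems in `H_d` having `x` as a multiple zero. -/
def SigmaRx {n : ℕ} (d : Fin n → ℕ) (x : Fin (n + 1) → ℝ) :
    Set (Fin n → MvPolynomial (Fin (n + 1)) ℝ) :=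
  {g | IsSystem d g ∧ (∀ i, MvPolynomial.eval x (g i) = 0) ∧ SingularAt g x}

/-- `Σ_ℝ = ⋃_{x ∈ Sⁿ} Σ_ℝ(x)`: the systems in `H_d` with a multiple zero on `Sⁿ`. -/
def SigmaR {n : ℕ} (d : Fin n → ℕ) : Set (Fin n → MvPolynomial (Fin (n + 1)) ℝ) :=
  ⋃ x ∈ unitSphere n, SigmaRx d x

/-- The smallest singular value of `diag(1/√dᵢ) · Df(x)|_{T_x Sⁿ}`, i.e.
`inf {‖diag(1/√dᵢ)·Df(x) v‖₂ : v ⊥ x, ‖v‖₂ = 1}`.  This equals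
`‖f‖_W · μ̃_norm(f,x)⁻¹`, where `μ̃_norm(f,x) = ‖f‖_W ‖(Df(x)|_{T_x Sⁿ})⁻¹ diag(√dᵢ)‖`
(spectral norm, `+∞` when `Df(x)|_{T_x Sⁿ}` is singular); it is `0` exactly
when `μ̃_norm(f,x) = +∞`. -/
noncomputable def sigmaMin {n : ℕ} (d : Fin n → ℕ)
    (f : Fin n → MvPolynomial (Fin (n + 1)) ℝ) (x : Fin (n + 1) → ℝ) : ℝ :=
  sInf ((fun v => Real.sqrt (∑ i,
      ((∑ k, MvPolynomial.eval x (MvPolynomial.pderiv k (f i)) * v k) / Real.sqrt (d i)) ^ 2)) ''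
    {v : Fin (n + 1) → ℝ | (∑ k, v k * x k = 0) ∧ ∑ k, v k ^ 2 = 1})

/-- `κ̃(f, x) = ‖f‖_W / (‖f‖_W² μ̃_norm(f,x)⁻² + ‖f(x)‖₂²)^{1/2}` as an extended
nonnegative real (value `+∞` when `f` has `x` as multiple zero), using
`‖f‖_W² μ̃_norm(f,x)⁻² = (sigmaMin d f x)²`. -/
noncomputable def kappaAt {n : ℕ} (d : Fin n → ℕ)
    (f : Fin n → MvPolynomial (Fin (n + 1)) ℝ) (x : Fin (n + 1) → ℝ) : ℝ≥0∞ :=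
  ENNReal.ofReal (bwNormSys f) /
    ENNReal.ofReal (Real.sqrt (sigmaMin d f x ^ 2 + ∑ i, (MvPolynomial.eval x (f i)) ^ 2))

/-- `κ̃(f) = max_{x ∈ Sⁿ} κ̃(f, x)`. -/
noncomputable def kappa {n : ℕ} (d : Fin n → ℕ)
    (f : Fin n → MvPolynomial (Fin (n + 1)) ℝ) : ℝ≥0∞ :=
  ⨆ x ∈ unitSphere n, kappaAt d f x

/-- The norm `‖f‖ = max_{1 ≤ i ≤ n} ‖f_i‖_W` used in [CKMW1]. -/
noncomputable def supNormSys {n : ℕ} (f : Fin n → MvPolynomial (Fin (n + 1)) ℝ) : ℝ :=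
  ⨆ i, bwNorm (f i)

/-- `‖f(x)‖_∞ = max_i |f_i(x)|`. -/
noncomputable def evalInfNorm {n : ℕ} (f : Fin n → MvPolynomial (Fin (n + 1)) ℝ)
    (x : Fin (n + 1) → ℝ) : ℝ :=
  ⨆ i, |MvPolynomial.eval x (f i)|

/-- `μ̃_norm(f, x) = ‖f‖_W ‖(Df(x)|_{T_x Sⁿ})⁻¹ diag(√dᵢ)‖` (spectral norm), with
value `+∞` when `Df(x)|_{T_x Sⁿ}` is singular: since
`‖(Df(x)|_{T_x Sⁿ})⁻¹ diag(√dᵢ)‖ = (sigmaMin d f x)⁻¹`, it is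
`‖f‖_W / sigmaMin d f x` in `ℝ≥0∞`. -/
noncomputable def muTilde {n : ℕ} (d : Fin n → ℕ)
    (f : Fin n → MvPolynomial (Fin (n + 1)) ℝ) (x : Fin (n + 1) → ℝ) : ℝ≥0∞ :=
  ENNReal.ofReal (bwNormSys f) / ENNReal.ofReal (sigmaMin d f x)

/-- `μ_norm(f, x) = √n ‖f‖ ‖(Df(x)|_{T_x Sⁿ})⁻¹ diag(√dᵢ)‖` (spectral norm), with
value `+∞` when `Df(x)|_{T_x Sⁿ}` is singular. -/
noncomputable def muNorm {n : ℕ} (d : Fin n → ℕ)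
    (f : Fin n → MvPolynomial (Fin (n + 1)) ℝ) (x : Fin (n + 1) → ℝ) : ℝ≥0∞ :=
  ENNReal.ofReal (Real.sqrt n * supNormSys f) / ENNReal.ofReal (sigmaMin d f x)

/-- The condition number of [CKMW1]:
`κ(f) = max_{x ∈ Sⁿ} min {μ_norm(f,x), ‖f‖ / ‖f(x)‖_∞}`. -/
noncomputable def kappaCKMW {n : ℕ} (d : Fin n → ℕ)
    (f : Fin n → MvPolynomial (Fin (n + 1)) ℝ) : ℝ≥0∞ :=
  ⨆ x ∈ unitSphere n,
    min (muNorm d f x) (ENNReal.ofReal (supNormSys f) / ENNReal.ofReal (evalInfNorm f x))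

private lemma bwInner_self_nonneg' {m : ℕ} (p : MvPolynomial (Fin m) ℝ) : 0 ≤ bwInner p p :=
  Finset.sum_nonneg fun j _ => div_nonneg (mul_self_nonneg _) (Nat.cast_nonneg _)

private lemma bwInner_self_pos' {m : ℕ} {p : MvPolynomial (Fin m) ℝ} (hp : p ≠ 0) :
    0 < bwInner p p := by
  obtain ⟨j, hj⟩ := Finset.nonempty_iff_ne_empty.mpr
    (fun h => hp (MvPolynomial.support_eq_empty.mp h))
  refine Finset.sum_pos' (fun j _ => div_nonneg (mul_self_nonneg _) (Nat.cast_nonneg _))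
    ⟨j, Finset.mem_union_left _ hj, ?_⟩
  exact div_pos (mul_self_pos.mpr (MvPolynomial.mem_support_iff.mp hj))
    (by exact_mod_cast Nat.multinomial_pos _ _)

/-- **Equivalence of the condition numbers.** For every nonzero `f ∈ H_d`,
`κ̃(f)/√n ≤ κ(f) ≤ √(2n)·κ̃(f)`. -/
theorem kappa_equiv_kappaCKMW {n : ℕ} (hn : 1 ≤ n) (d : Fin n → ℕ)
    (hd : ∀ i, 1 ≤ d i) (f : Fin n → MvPolynomial (Fin (n + 1)) ℝ)
    (hf : IsSystem d f) (hf0 : f ≠ 0) :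
    kappa d f / ENNReal.ofReal (Real.sqrt n) ≤ kappaCKMW d f ∧
      kappaCKMW d f ≤ ENNReal.ofReal (Real.sqrt (2 * n)) * kappa d f := by
  classical
  haveI : Nonempty (Fin n) := ⟨⟨0, hn⟩⟩
  have hnR : (1 : ℝ) ≤ n := by exact_mod_cast hn
  have hnn : (0 : ℝ) ≤ n := by linarith
  have hsn0 : 0 ≤ Real.sqrt n := Real.sqrt_nonneg _
  have hsn1 : (1 : ℝ) ≤ Real.sqrt n := by
    rw [show (1 : ℝ) = Real.sqrt 1 by simp]
    exact Real.sqrt_le_sqrt hnR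
  have hsnn : Real.sqrt n * Real.sqrt n = (n : ℝ) := Real.mul_self_sqrt hnn
  have hsn_le : Real.sqrt n ≤ (n : ℝ) := by nlinarith
  obtain ⟨i₁, hi₁⟩ : ∃ i, f i ≠ 0 := by
    by_contra h; push_neg at h; exact hf0 (funext h)
  set A := bwNormSys f with hAdef
  set N := supNormSys f with hNdef
  have hbw_nonneg : ∀ i, 0 ≤ bwInner (f i) (f i) := fun i => bwInner_self_nonneg' _
  have hA_nonneg : 0 ≤ A := Real.sqrt_nonneg _
  have hN_bdd : BddAbove (Set.range fun i => bwNorm (f i)) :=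
    Set.Finite.bddAbove (Set.finite_range _)
  have hNi : ∀ i, bwNorm (f i) ≤ N := fun i => le_ciSup hN_bdd i
  obtain ⟨i₀, hi₀⟩ := Finite.exists_max fun i => bwNorm (f i)
  have hN_eq : N = bwNorm (f i₀) :=
    le_antisymm (ciSup_le hi₀) (le_ciSup hN_bdd i₀)
  have hN_nonneg : 0 ≤ N := hN_eq ▸ Real.sqrt_nonneg _
  have hN_le_A : N ≤ A := by
    rw [hN_eq, hAdef]
    exact Real.sqrt_le_sqrt
      (Finset.single_le_sum (fun i _ => hbw_nonneg i) (Finset.mem_univ i₀))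
  have hA_le : A ≤ Real.sqrt n * N := by
    rw [hAdef]
    have hsum : ∑ i, bwInner (f i) (f i) ≤ (n : ℝ) * N ^ 2 := by
      calc ∑ i, bwInner (f i) (f i) ≤ ∑ _i : Fin n, N ^ 2 := by
            refine Finset.sum_le_sum fun i _ => ?_
            have h1 : bwNorm (f i) ^ 2 = bwInner (f i) (f i) :=
              Real.sq_sqrt (hbw_nonneg i)
            rw [← h1]
            exact pow_le_pow_left₀ (Real.sqrt_nonneg _) (hNi i) 2
        _ = (n : ℝ) * N ^ 2 := by simp [mul_comm]
    calc bwNormSys f = Real.sqrt (∑ i, bwInner (f i) (f i)) := rfl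
      _ ≤ Real.sqrt ((n : ℝ) * N ^ 2) := Real.sqrt_le_sqrt hsum
      _ = Real.sqrt n * N := by
          rw [Real.sqrt_mul hnn, Real.sqrt_sq hN_nonneg]
  have hN_pos : 0 < N :=
    lt_of_lt_of_le (Real.sqrt_pos.mpr (bwInner_self_pos' hi₁)) (hNi i₁)
  have hA_pos : 0 < A := lt_of_lt_of_le hN_pos hN_le_A
  have h2 : (0 : ℝ) ≤ 2 := by norm_num
  have hs2 : (0 : ℝ) < Real.sqrt 2 := Real.sqrt_pos.mpr (by norm_num)
  have hs2n : Real.sqrt (2 * n) = Real.sqrt 2 * Real.sqrt n := Real.sqrt_mul h2 _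
  have hs2n0 : (0 : ℝ) < Real.sqrt (2 * n) := by rw [hs2n]; positivity
  -- the key pointwise estimates
  have key : ∀ x : Fin (n + 1) → ℝ,
      kappaAt d f x ≤ ENNReal.ofReal (Real.sqrt n) *
        min (muNorm d f x)
          (ENNReal.ofReal (supNormSys f) / ENNReal.ofReal (evalInfNorm f x)) ∧
      min (muNorm d f x)
          (ENNReal.ofReal (supNormSys f) / ENNReal.ofReal (evalInfNorm f x)) ≤
        ENNReal.ofReal (Real.sqrt (2 * n)) * kappaAt d f x := by
    intro x
    set σ := sigmaMin d f x with hσdef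
    set B := ∑ i, (MvPolynomial.eval x (f i)) ^ 2 with hBdef
    set e := evalInfNorm f x with hedef
    have hσ : 0 ≤ σ := by
      rw [hσdef]
      exact Real.sInf_nonneg (by rintro _ ⟨v, _, rfl⟩; exact Real.sqrt_nonneg _)
    have hB : 0 ≤ B := Finset.sum_nonneg fun i _ => sq_nonneg _
    set D := Real.sqrt (σ ^ 2 + B) with hDdef
    have hD : 0 ≤ D := Real.sqrt_nonneg _
    have he_bdd : BddAbove (Set.range fun i => |MvPolynomial.eval x (f i)|) :=
      Set.Finite.bddAbove (Set.finite_range _)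
    have hei : ∀ i, |MvPolynomial.eval x (f i)| ≤ e := fun i => le_ciSup he_bdd i
    have he_nonneg : 0 ≤ e := le_trans (abs_nonneg _) (hei i₁)
    have hb_le : Real.sqrt B ≤ Real.sqrt n * e := by
      have hsum : B ≤ (n : ℝ) * e ^ 2 := by
        calc B ≤ ∑ _i : Fin n, e ^ 2 := by
              refine Finset.sum_le_sum fun i _ => ?_
              rw [← sq_abs]
              exact pow_le_pow_left₀ (abs_nonneg _) (hei i) 2
          _ = (n : ℝ) * e ^ 2 := by simp [mul_comm]
      calc Real.sqrt B ≤ Real.sqrt ((n : ℝ) * e ^ 2) := Real.sqrt_le_sqrt hsum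
        _ = Real.sqrt n * e := by rw [Real.sqrt_mul hnn, Real.sqrt_sq he_nonneg]
    have he_le_b : e ≤ Real.sqrt B := by
      obtain ⟨j₀, hj₀⟩ := Finite.exists_max fun i => |MvPolynomial.eval x (f i)|
      have h1 : e ≤ |MvPolynomial.eval x (f j₀)| := ciSup_le hj₀
      refine h1.trans ?_
      rw [← Real.sqrt_sq_eq_abs]
      have h2' : (MvPolynomial.eval x (f j₀)) ^ 2 ≤ B := by
        rw [hBdef]
        exact Finset.single_le_sum (f := fun i => (MvPolynomial.eval x (f i)) ^ 2)
          (fun i _ => sq_nonneg _) (Finset.mem_univ j₀)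
      exact Real.sqrt_le_sqrt h2'
    have hσD : σ ≤ D := by
      calc σ = Real.sqrt (σ ^ 2) := (Real.sqrt_sq hσ).symm
        _ ≤ D := Real.sqrt_le_sqrt (by linarith)
    have hbD : Real.sqrt B ≤ D := Real.sqrt_le_sqrt (by nlinarith [sq_nonneg σ])
    have heD : e ≤ D := he_le_b.trans hbD
    have hkarw : kappaAt d f x = ENNReal.ofReal A / ENNReal.ofReal D := rfl
    have hmurw : muNorm d f x =
        ENNReal.ofReal (Real.sqrt n * N) / ENNReal.ofReal σ := rfl
    constructor
    · -- left pointwise inequality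
      have L1 : kappaAt d f x ≤ ENNReal.ofReal (Real.sqrt n) * muNorm d f x := by
        rw [hkarw, hmurw, ← mul_div_assoc, ← ENNReal.ofReal_mul hsn0]
        refine ENNReal.div_le_div (ENNReal.ofReal_le_ofReal ?_)
          (ENNReal.ofReal_le_ofReal hσD)
        calc A ≤ Real.sqrt n * N := hA_le
          _ ≤ Real.sqrt n * (Real.sqrt n * N) := by nlinarith
      have L2 : kappaAt d f x ≤ ENNReal.ofReal (Real.sqrt n) *
          (ENNReal.ofReal N / ENNReal.ofReal e) := by
        rw [hkarw, ← mul_div_assoc, ← ENNReal.ofReal_mul hsn0]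
        exact ENNReal.div_le_div (ENNReal.ofReal_le_ofReal hA_le)
          (ENNReal.ofReal_le_ofReal heD)
      rcases le_total (muNorm d f x)
          (ENNReal.ofReal (supNormSys f) / ENNReal.ofReal (evalInfNorm f x)) with h | h
      · rw [min_eq_left h]; exact L1
      · rw [min_eq_right h]; exact L2
    · -- right pointwise inequality
      have hRHS : ENNReal.ofReal (Real.sqrt (2 * n)) * kappaAt d f x =
          ENNReal.ofReal (Real.sqrt (2 * n) * A) / ENNReal.ofReal D := by
        rw [hkarw, ← mul_div_assoc, ← ENNReal.ofReal_mul hs2n0.le]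
      rcases le_total B (σ ^ 2) with hc | hc
      · -- σ dominates
        refine le_trans (min_le_left _ _) ?_
        rw [hmurw, hRHS]
        have hcan : ENNReal.ofReal (Real.sqrt n * N) / ENNReal.ofReal σ =
            ENNReal.ofReal (Real.sqrt 2 * (Real.sqrt n * N)) /
              ENNReal.ofReal (Real.sqrt 2 * σ) := by
          rw [ENNReal.ofReal_mul hs2.le, ENNReal.ofReal_mul hs2.le,
            ENNReal.mul_div_mul_left _ _ (by simp only [ne_eq, ENNReal.ofReal_eq_zero, not_le]; exact hs2) ENNReal.ofReal_ne_top]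
        rw [hcan]
        refine ENNReal.div_le_div (ENNReal.ofReal_le_ofReal ?_)
          (ENNReal.ofReal_le_ofReal ?_)
        · calc Real.sqrt 2 * (Real.sqrt n * N) = Real.sqrt (2 * n) * N := by
                rw [hs2n]; ring
            _ ≤ Real.sqrt (2 * n) * A :=
              mul_le_mul_of_nonneg_left hN_le_A hs2n0.le
        · calc D ≤ Real.sqrt (2 * σ ^ 2) := Real.sqrt_le_sqrt (by linarith)
            _ = Real.sqrt 2 * σ := by
                rw [Real.sqrt_mul h2, Real.sqrt_sq hσ]
      · -- the evaluation dominates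
        refine le_trans (min_le_right _ _) ?_
        rw [hRHS, ← hNdef]
        have hcan : ENNReal.ofReal N / ENNReal.ofReal e =
            ENNReal.ofReal (Real.sqrt (2 * n) * N) /
              ENNReal.ofReal (Real.sqrt (2 * n) * e) := by
          rw [ENNReal.ofReal_mul hs2n0.le, ENNReal.ofReal_mul hs2n0.le,
            ENNReal.mul_div_mul_left _ _ (by simp only [ne_eq, ENNReal.ofReal_eq_zero, not_le]; exact hs2n0) ENNReal.ofReal_ne_top]
        rw [hcan]
        refine ENNReal.div_le_div (ENNReal.ofReal_le_ofReal
          (mul_le_mul_of_nonneg_left hN_le_A hs2n0.le)) (ENNReal.ofReal_le_ofReal ?_)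
        calc D ≤ Real.sqrt (2 * B) := Real.sqrt_le_sqrt (by linarith)
          _ = Real.sqrt 2 * Real.sqrt B := Real.sqrt_mul h2 _
          _ ≤ Real.sqrt 2 * (Real.sqrt n * e) :=
            mul_le_mul_of_nonneg_left hb_le hs2.le
          _ = Real.sqrt (2 * n) * e := by rw [hs2n]; ring
  constructor
  · refine div_le_of_le_mul' ?_
    rw [show kappa d f = ⨆ x ∈ unitSphere n, kappaAt d f x from rfl]
    refine iSup₂_le fun x hx => ?_
    refine le_trans (key x).1 (mul_le_mul_right ?_ _)
    exact le_iSup₂ (f := fun x (_ : x ∈ unitSphere n) =>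
      min (muNorm d f x)
        (ENNReal.ofReal (supNormSys f) / ENNReal.ofReal (evalInfNorm f x))) x hx
  · rw [show kappaCKMW d f = ⨆ x ∈ unitSphere n,
      min (muNorm d f x)
        (ENNReal.ofReal (supNormSys f) / ENNReal.ofReal (evalInfNorm f x)) from rfl]
    refine iSup₂_le fun x hx => ?_
    refine le_trans (key x).2 (mul_le_mul_right ?_ _)
    exact le_iSup₂ (f := fun x (_ : x ∈ unitSphere n) => kappaAt d f x) x hx
end
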